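/- Let (Yₙ(x))_{n≥1}, Y(x) be random fields on a compact set G ⊆ ℝ^d with values in ℝ, p ≥ 2. Assume: (i) sup_{x∈G} E[|Yₙ(x) − Y(x)|^{2p}] ≤ c·aₙ with aₙ → 0; (ii) E[|Yₙ(x) − Yₙ(y)|^{2p}] ≤ c|x−y|^{2p} and E[|Y(x) − Y(y)|^{2p}] ≤ c|x−y|^{2p} uniformly in n, where 2p > 2d. Then E[ sup_{x∈G} |Yₙ(x) − Y(x)|^{2p} ] → 0 as n → ∞. -/

import Mathlib

open MeasureTheory Metric Filter
open scoped ENNReal NNReal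

private lemma iSup_rpow_aux {ι : Sort*} (g : ι → ℝ≥0∞) {e : ℝ} (he : 0 < e) :
    (⨆ i, g i) ^ e = ⨆ i, (g i) ^ e := by
  rcases isEmpty_or_nonempty ι with h | h
  · simp [iSup_of_empty, ENNReal.zero_rpow_of_pos he]
  refine le_antisymm ?_ (iSup_le fun i => ENNReal.rpow_le_rpow (le_iSup g i) he.le)
  set L := ⨆ i, (g i) ^ e with hL
  have h1 : ∀ i, g i ≤ L ^ e⁻¹ := by
    intro i
    have h2 : (g i) ^ e ≤ L := le_iSup (fun i => (g i) ^ e) i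
    calc g i = ((g i) ^ e) ^ e⁻¹ := (ENNReal.rpow_rpow_inv he.ne' _).symm
    _ ≤ L ^ e⁻¹ := ENNReal.rpow_le_rpow h2 (by positivity)
  calc (⨆ i, g i) ^ e ≤ (L ^ e⁻¹) ^ e := ENNReal.rpow_le_rpow (iSup_le h1) he.le
  _ = L := ENNReal.rpow_inv_rpow he.ne' L

private lemma sup_rpow_le_sum {ι : Type*} (s : Finset ι) (f : ι → ℝ≥0∞) {e : ℝ} (he : 0 < e) :
    (s.sup f) ^ e ≤ ∑ i ∈ s, (f i) ^ e := by
  rcases s.eq_empty_or_nonempty with rfl | hs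
  · simp [ENNReal.zero_rpow_of_pos he]
  · obtain ⟨i, hi, hsup⟩ := s.exists_mem_eq_sup hs f
    rw [hsup]
    exact Finset.single_le_sum (f := fun i => (f i) ^ e) (fun j _ => zero_le) hi

private lemma add_rpow_le_aux (a b : ℝ≥0∞) {e : ℝ} (he : 0 ≤ e) :
    (a + b) ^ e ≤ 2 ^ e * (a ^ e + b ^ e) := by
  have h1 : a + b ≤ 2 * (a ⊔ b) := by
    rcases le_total a b with h | h
    · calc a + b ≤ b + b := by gcongr
      _ = 2 * b := (two_mul b).symm
      _ ≤ 2 * (a ⊔ b) := by gcongr; exact le_sup_right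
    · calc a + b ≤ a + a := by gcongr
      _ = 2 * a := (two_mul a).symm
      _ ≤ 2 * (a ⊔ b) := by gcongr; exact le_sup_left
  calc (a + b) ^ e ≤ (2 * (a ⊔ b)) ^ e := ENNReal.rpow_le_rpow h1 he
  _ = 2 ^ e * (a ⊔ b) ^ e := ENNReal.mul_rpow_of_nonneg _ _ he
  _ ≤ 2 ^ e * (a ^ e + b ^ e) := by
      gcongr
      rcases le_total a b with h | h
      · rw [sup_eq_right.2 h]; exact le_add_self
      · rw [sup_eq_left.2 h]; exact self_le_add_right _ _

private lemma lintegral_tsum_rpow {Ω : Type} [MeasurableSpace Ω] (P : Measure Ω)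
    {q : ℝ} (hq : 1 ≤ q) (W : ℕ → Ω → ℝ≥0∞) (hW : ∀ i, Measurable (W i)) :
    (∫⁻ ω, (∑' i, W i ω) ^ q ∂P) ^ (1/q) ≤ ∑' i, (∫⁻ ω, (W i ω) ^ q ∂P) ^ (1/q) := by
  have hq0 : (0:ℝ) < q := lt_of_lt_of_le one_pos hq
  have hSmeas : ∀ m, Measurable (fun ω => ∑ i ∈ Finset.range m, W i ω) := fun m =>
    Finset.measurable_sum _ fun i _ => hW i
  have hmink : ∀ m, (∫⁻ ω, (∑ i ∈ Finset.range m, W i ω) ^ q ∂P) ^ (1/q) ≤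
      ∑ i ∈ Finset.range m, (∫⁻ ω, (W i ω) ^ q ∂P) ^ (1/q) := by
    intro m
    induction m with
    | zero =>
      simp only [Finset.range_zero, Finset.sum_empty, lintegral_const,
        ENNReal.zero_rpow_of_pos hq0, zero_mul]
      rw [ENNReal.zero_rpow_of_pos (by positivity : (0:ℝ) < 1/q)]
    | succ m ih =>
      have h2 : (∫⁻ ω, (∑ i ∈ Finset.range (m+1), W i ω) ^ q ∂P) ^ (1/q) ≤
          (∫⁻ ω, (∑ i ∈ Finset.range m, W i ω) ^ q ∂P) ^ (1/q)
            + (∫⁻ ω, (W m ω) ^ q ∂P) ^ (1/q) := by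
        have h3 := ENNReal.lintegral_Lp_add_le (μ := P)
          (hSmeas m).aemeasurable (hW m).aemeasurable hq
        simpa [Finset.sum_range_succ] using h3
      refine h2.trans ?_
      rw [Finset.sum_range_succ]
      exact add_le_add ih le_rfl
  have key : ∫⁻ ω, (∑' i, W i ω) ^ q ∂P
      = ⨆ m, ∫⁻ ω, (∑ i ∈ Finset.range m, W i ω) ^ q ∂P := by
    have h4 : ∀ ω, (∑' i, W i ω) ^ q = ⨆ m, (∑ i ∈ Finset.range m, W i ω) ^ q := fun ω => by
      rw [ENNReal.tsum_eq_iSup_nat, iSup_rpow_aux _ hq0]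
    simp_rw [h4]
    exact lintegral_iSup (fun m => (hSmeas m).pow_const q)
      (fun m m' hmm' ω => ENNReal.rpow_le_rpow
        (Finset.sum_le_sum_of_subset (Finset.range_subset_range.2 hmm')) hq0.le)
  rw [key, iSup_rpow_aux _ (by positivity : (0:ℝ) < 1/q)]
  exact iSup_le fun m => (hmink m).trans (ENNReal.sum_le_tsum _)

private lemma exists_net_aux {d : ℕ} (G : Set (EuclideanSpace ℝ (Fin d))) (hG : IsCompact G)
    {r : ℝ} (hr : 0 < r) :
    ∃ F : Finset (EuclideanSpace ℝ (Fin d)), ↑F ⊆ G ∧ (∀ x ∈ G, ∃ u ∈ F, dist x u ≤ r) ∧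
      (F : Set (EuclideanSpace ℝ (Fin d))).Pairwise fun u v => r ≤ dist u v := by
  classical
  set S : Set (Set (EuclideanSpace ℝ (Fin d))) :=
    {T | T ⊆ G ∧ T.Pairwise fun u v => r ≤ dist u v} with hS
  obtain ⟨T, hTmax⟩ := zorn_subset S (by
    intro c hcS hchain
    refine ⟨⋃₀ c, ⟨Set.sUnion_subset fun s hs => (hcS hs).1, ?_⟩,
      fun s hs => Set.subset_sUnion_of_mem hs⟩
    intro u hu v hv huv
    obtain ⟨s, hs, hus⟩ := hu
    obtain ⟨t, ht, hvt⟩ := hv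
    rcases hchain.total hs ht with h | h
    · exact (hcS ht).2 (h hus) hvt huv
    · exact (hcS hs).2 hus (h hvt) huv)
  have hTS : T ∈ S := hTmax.1
  have hTG : T ⊆ G := hTS.1
  have hTsep : T.Pairwise fun u v => r ≤ dist u v := hTS.2
  have hnet : ∀ x ∈ G, ∃ u ∈ T, dist x u ≤ r := by
    intro x hx
    by_contra hcon
    push_neg at hcon
    have hins : insert x T ∈ S := by
      refine ⟨Set.insert_subset hx hTG, ?_⟩
      rw [Set.pairwise_insert]
      exact ⟨hTsep, fun v hv _ => ⟨(hcon v hv).le, by rw [dist_comm]; exact (hcon v hv).le⟩⟩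
    have hxT : x ∈ T := hTmax.2 hins (Set.subset_insert x T) (Set.mem_insert x T)
    have := hcon x hxT
    simp only [dist_self] at this
    linarith
  -- finiteness
  obtain ⟨t, htG, htfin, hcov⟩ := finite_cover_balls_of_compact hG (half_pos hr)
  set f : EuclideanSpace ℝ (Fin d) → EuclideanSpace ℝ (Fin d) := fun u =>
    if h : ∃ x ∈ t, u ∈ ball x (r/2) then h.choose else u with hf
  have hft : ∀ u ∈ T, f u ∈ t ∧ dist u (f u) < r/2 := by
    intro u hu
    have hmem : ∃ x ∈ t, u ∈ ball x (r/2) := by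
      have := hcov (hTG hu)
      simpa using this
    rw [hf]
    simp only [dif_pos hmem]
    refine ⟨hmem.choose_spec.1, ?_⟩
    have := hmem.choose_spec.2
    rwa [mem_ball] at this
  have hinj : Set.InjOn f T := by
    intro u hu v hv huv
    by_contra hne
    have h1 := (hft u hu).2
    have h2 := (hft v hv).2
    have h3 : dist u v < r := by
      calc dist u v ≤ dist u (f u) + dist (f v) v := by
            rw [huv]; exact dist_triangle _ _ _
      _ < r/2 + r/2 := by rw [dist_comm (f v) v]; linarith
      _ = r := by ring
    exact absurd (hTsep hu hv hne) (not_le.2 h3)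
  have hTfin : T.Finite := Set.Finite.of_finite_image
    (htfin.subset (by rintro _ ⟨u, hu, rfl⟩; exact (hft u hu).1)) hinj
  refine ⟨hTfin.toFinset, by simpa using hTG, ?_, by simpa using hTsep⟩
  intro x hx
  obtain ⟨u, hu, hdu⟩ := hnet x hx
  exact ⟨u, by simpa using hu, hdu⟩

private lemma packing_card_aux {d : ℕ} (hd : d ≠ 0) {r R : ℝ} (hr : 0 < r)
    (F : Finset (EuclideanSpace ℝ (Fin d)))
    (hsep : (F : Set (EuclideanSpace ℝ (Fin d))).Pairwise fun u v => r ≤ dist u v)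
    (hsub : ∀ u ∈ F, ‖u‖ ≤ R) :
    (F.card : ℝ≥0∞) * (ENNReal.ofReal ((r/2) ^ d) * volume (ball (0:EuclideanSpace ℝ (Fin d)) 1))
      ≤ volume (ball (0:EuclideanSpace ℝ (Fin d)) (R + r)) := by
  haveI : Nonempty (Fin d) := ⟨⟨0, Nat.pos_of_ne_zero hd⟩⟩
  have hdisj : (F : Set (EuclideanSpace ℝ (Fin d))).PairwiseDisjoint
      (fun u => ball u (r/2)) := by
    intro u hu v hv huv
    refine Set.disjoint_left.2 fun z hzu hzv => ?_
    rw [mem_ball, dist_comm] at hzu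
    rw [mem_ball] at hzv
    have h1 : dist u v < r := by
      calc dist u v ≤ dist u z + dist z v := dist_triangle _ _ _
      _ < r/2 + r/2 := by linarith
      _ = r := by ring
    exact absurd (hsep hu hv huv) (not_le.2 h1)
  have hunion : (⋃ u ∈ F, ball u (r/2)) ⊆ ball 0 (R + r) := by
    intro z hz
    simp only [Set.mem_iUnion] at hz
    obtain ⟨u, hu, hzu⟩ := hz
    rw [mem_ball] at hzu ⊢
    have hu0 : dist u 0 ≤ R := by rw [dist_zero_right]; exact hsub u hu
    calc dist z 0 ≤ dist z u + dist u 0 := dist_triangle _ _ _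
    _ < r/2 + R := by linarith
    _ ≤ R + r := by linarith
  have hmeq := measure_biUnion_finset (μ := volume) hdisj (fun u _ => measurableSet_ball)
  have heach : ∀ u : EuclideanSpace ℝ (Fin d), volume (ball u (r/2))
      = ENNReal.ofReal ((r/2) ^ d) * volume (ball (0:EuclideanSpace ℝ (Fin d)) 1) := by
    intro u
    rw [Measure.addHaar_ball volume u (by positivity : (0:ℝ) ≤ r/2),
      finrank_euclideanSpace_fin]
  calc (F.card : ℝ≥0∞) * (ENNReal.ofReal ((r/2) ^ d)
        * volume (ball (0:EuclideanSpace ℝ (Fin d)) 1))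
      = ∑ u ∈ F, volume (ball u (r/2)) := by
        simp only [heach, Finset.sum_const, nsmul_eq_mul]
  _ = volume (⋃ u ∈ F, ball u (r/2)) := hmeq.symm
  _ ≤ volume (ball 0 (R + r)) := measure_mono hunion

open MeasureTheory Metric Filter
open scoped ENNReal NNReal

/-- If random fields `Yₙ` converge to `Y` in `2p`-th moment uniformly over a
compact `G ⊆ ℝ^d`, with uniform two-point Lipschitz `2p`-th moment bounds
(`2p > 2d`), then the `2p`-th moment of the supremum `sup_{x∈G} |Yₙ(x) − Y(x)|`
tends to `0`. -/
theorem sup_moment_convergence_from_pointwise_rate (d : ℕ)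
    {Ω : Type} [MeasurableSpace Ω] (P : Measure Ω) [IsProbabilityMeasure P]
    (G : Set (EuclideanSpace ℝ (Fin d))) (hGcomp : IsCompact G) (hGne : G.Nonempty)
    (p : ℝ) (hp : 2 ≤ p) (hpd : 2 * (d : ℝ) < 2 * p)
    (Yn : ℕ → Ω → EuclideanSpace ℝ (Fin d) → ℝ) (Y : Ω → EuclideanSpace ℝ (Fin d) → ℝ)
    (hmeasn : ∀ n x, Measurable (fun ω => Yn n ω x))
    (hmeas : ∀ x, Measurable (fun ω => Y ω x))
    (hcontn : ∀ n, ∀ᵐ ω ∂P, ContinuousOn (Yn n ω) G)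
    (hcont : ∀ᵐ ω ∂P, ContinuousOn (Y ω) G)
    (c : ℝ≥0∞) (hc : c ≠ ⊤) (a : ℕ → ℝ≥0∞)
    (ha : Tendsto a atTop (nhds 0))
    (hrate : ∀ n, ∀ x ∈ G,
      (∫⁻ ω, (‖Yn n ω x - Y ω x‖₊ : ℝ≥0∞) ^ (2 * p) ∂P) ≤ c * a n)
    (hholdn : ∀ n, ∀ x ∈ G, ∀ y ∈ G,
      (∫⁻ ω, (‖Yn n ω x - Yn n ω y‖₊ : ℝ≥0∞) ^ (2 * p) ∂P) ≤
        c * (‖x - y‖₊ : ℝ≥0∞) ^ (2 * p))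
    (hhold : ∀ x ∈ G, ∀ y ∈ G,
      (∫⁻ ω, (‖Y ω x - Y ω y‖₊ : ℝ≥0∞) ^ (2 * p) ∂P) ≤
        c * (‖x - y‖₊ : ℝ≥0∞) ^ (2 * p)) :
    Tendsto (fun n => ∫⁻ ω, ⨆ x : G, (‖Yn n ω x - Y ω x‖₊ : ℝ≥0∞) ^ (2 * p) ∂P)
      atTop (nhds 0) := by
  classical
  set q : ℝ := 2 * p with hq_def
  have hq1 : (1:ℝ) ≤ q := by rw [hq_def]; linarith
  have hq0 : (0:ℝ) < q := by linarith
  have hqne : q ≠ 0 := ne_of_gt hq0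
  have hqd : 2 * (d:ℝ) < q := hpd
  have hca : Tendsto (fun n => c * a n) atTop (nhds 0) := by
    simpa using ENNReal.Tendsto.const_mul ha (Or.inr hc)
  -- measurability helpers
  have mZ : ∀ n x, Measurable fun ω => (‖Yn n ω x - Y ω x‖₊ : ℝ≥0∞) :=
    fun n x => ((hmeasn n x).sub (hmeas x)).nnnorm.coe_nnreal_ennreal
  have mZpair : ∀ n (u v : EuclideanSpace ℝ (Fin d)),
      Measurable fun ω => (‖(Yn n ω u - Y ω u) - (Yn n ω v - Y ω v)‖₊ : ℝ≥0∞) :=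
    fun n u v => (((hmeasn n u).sub (hmeas u)).sub
      ((hmeasn n v).sub (hmeas v))).nnnorm.coe_nnreal_ennreal
  -- trivial dimension zero case
  rcases eq_or_ne d 0 with hd0 | hd0
  · subst hd0
    haveI : Subsingleton (EuclideanSpace ℝ (Fin 0)) :=
      ⟨fun a b => by ext i; exact i.elim0⟩
    obtain ⟨x₀, hx₀⟩ := hGne
    have hbound : ∀ n, (∫⁻ ω, ⨆ x : G, (‖Yn n ω x - Y ω x‖₊ : ℝ≥0∞) ^ q ∂P) ≤ c * a n := by
      intro n
      refine le_trans (lintegral_mono fun ω => ?_) (hrate n x₀ hx₀)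
      refine iSup_le fun x => ?_
      have hx : (x : EuclideanSpace ℝ (Fin 0)) = x₀ := Subsingleton.elim _ _
      rw [hx]
    exact tendsto_of_tendsto_of_tendsto_of_le_of_le tendsto_const_nhds hca
      (fun n => zero_le) hbound
  -- increment moment bound
  set C : ℝ≥0∞ := 2 ^ q * (c + c) with hC_def
  have h2top : ((2:ℝ≥0∞) ^ q) ≠ ⊤ :=
    (ENNReal.rpow_lt_top_of_nonneg hq0.le (by simp)).ne
  have hCne : C ≠ ⊤ := ENNReal.mul_ne_top h2top (ENNReal.add_ne_top.2 ⟨hc, hc⟩)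
  have hinc : ∀ n, ∀ u ∈ G, ∀ v ∈ G,
      (∫⁻ ω, (‖(Yn n ω u - Y ω u) - (Yn n ω v - Y ω v)‖₊ : ℝ≥0∞) ^ q ∂P) ≤
        C * ((‖u - v‖₊ : ℝ≥0∞)) ^ q := by
    intro n u hu v hv
    have hptw : ∀ ω, (‖(Yn n ω u - Y ω u) - (Yn n ω v - Y ω v)‖₊ : ℝ≥0∞) ^ q ≤
        2 ^ q * ((‖Yn n ω u - Yn n ω v‖₊ : ℝ≥0∞) ^ q + (‖Y ω u - Y ω v‖₊ : ℝ≥0∞) ^ q) := by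
      intro ω
      have h1 : (‖(Yn n ω u - Y ω u) - (Yn n ω v - Y ω v)‖₊ : ℝ≥0∞) ≤
          (‖Yn n ω u - Yn n ω v‖₊ : ℝ≥0∞) + (‖Y ω u - Y ω v‖₊ : ℝ≥0∞) := by
        rw [← ENNReal.coe_add]
        refine ENNReal.coe_le_coe.2 ?_
        have heq : (Yn n ω u - Y ω u) - (Yn n ω v - Y ω v)
            = (Yn n ω u - Yn n ω v) - (Y ω u - Y ω v) := by ring
        rw [heq]
        exact nnnorm_sub_le _ _
      calc (‖(Yn n ω u - Y ω u) - (Yn n ω v - Y ω v)‖₊ : ℝ≥0∞) ^ q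
          ≤ ((‖Yn n ω u - Yn n ω v‖₊ : ℝ≥0∞) + (‖Y ω u - Y ω v‖₊ : ℝ≥0∞)) ^ q :=
            ENNReal.rpow_le_rpow h1 hq0.le
      _ ≤ _ := add_rpow_le_aux _ _ hq0.le
    have hmeas1 : Measurable fun ω => (‖Yn n ω u - Yn n ω v‖₊ : ℝ≥0∞) ^ q :=
      (((hmeasn n u).sub (hmeasn n v)).nnnorm.coe_nnreal_ennreal).pow_const q
    have hmeas2 : Measurable fun ω => (‖Y ω u - Y ω v‖₊ : ℝ≥0∞) ^ q :=
      (((hmeas u).sub (hmeas v)).nnnorm.coe_nnreal_ennreal).pow_const q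
    calc (∫⁻ ω, (‖(Yn n ω u - Y ω u) - (Yn n ω v - Y ω v)‖₊ : ℝ≥0∞) ^ q ∂P)
        ≤ ∫⁻ ω, 2 ^ q * ((‖Yn n ω u - Yn n ω v‖₊ : ℝ≥0∞) ^ q
            + (‖Y ω u - Y ω v‖₊ : ℝ≥0∞) ^ q) ∂P := lintegral_mono hptw
    _ = 2 ^ q * ((∫⁻ ω, (‖Yn n ω u - Yn n ω v‖₊ : ℝ≥0∞) ^ q ∂P)
          + ∫⁻ ω, (‖Y ω u - Y ω v‖₊ : ℝ≥0∞) ^ q ∂P) := by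
        rw [lintegral_const_mul (f := fun ω => (‖Yn n ω u - Yn n ω v‖₊ : ℝ≥0∞) ^ q + (‖Y ω u - Y ω v‖₊ : ℝ≥0∞) ^ q) _ (hmeas1.add hmeas2), lintegral_add_left hmeas1]
    _ ≤ 2 ^ q * (c * (‖u - v‖₊ : ℝ≥0∞) ^ q + c * (‖u - v‖₊ : ℝ≥0∞) ^ q) := by
        gcongr
        · exact hholdn n u hu v hv
        · exact hhold u hu v hv
    _ = C * (‖u - v‖₊ : ℝ≥0∞) ^ q := by rw [hC_def]; ring
  -- nets
  have hhalf : ∀ k : ℕ, (0:ℝ) < (2⁻¹) ^ k := fun k => by positivity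
  choose F hFG hFnet hFsep using fun k : ℕ => exists_net_aux G hGcomp (hhalf k)
  choose π hπF hπd using fun (k : ℕ) (x : G) => hFnet k x x.2
  -- bounded
  obtain ⟨R0, hR0⟩ := isBounded_iff_forall_norm_le.1 hGcomp.isBounded
  set R := max R0 0 with hR_def
  have hR : ∀ x ∈ G, ‖x‖ ≤ R := fun x hx => (hR0 x hx).trans (le_max_left _ _)
  -- M, pairs, B
  set M : ℕ → ℕ → Ω → ℝ≥0∞ := fun n K ω =>
    (F K).sup fun u => (‖Yn n ω u - Y ω u‖₊ : ℝ≥0∞) with hM_def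
  set Pr : ℕ → Finset (EuclideanSpace ℝ (Fin d) × EuclideanSpace ℝ (Fin d)) := fun k =>
    ((F (k+1)) ×ˢ (F k)).filter (fun uv => dist uv.1 uv.2 ≤ 2 * 2⁻¹ ^ k) with hPr_def
  set B : ℕ → ℕ → Ω → ℝ≥0∞ := fun n k ω =>
    (Pr k).sup fun uv =>
      (‖(Yn n ω uv.1 - Y ω uv.1) - (Yn n ω uv.2 - Y ω uv.2)‖₊ : ℝ≥0∞) with hB_def
  have mM : ∀ n K, Measurable (M n K) := by
    intro n K
    have heq : M n K = fun ω => ⨆ u ∈ (F K : Set (EuclideanSpace ℝ (Fin d))),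
        (‖Yn n ω u - Y ω u‖₊ : ℝ≥0∞) := by
      funext ω
      simp only [hM_def]
      rw [Finset.sup_eq_iSup]
      simp [Finset.mem_coe]
    rw [heq]
    exact Measurable.biSup _ (F K).countable_toSet fun u _ => mZ n u
  have mB : ∀ n k, Measurable (B n k) := by
    intro n k
    have heq : B n k = fun ω => ⨆ uv ∈ (Pr k : Set (EuclideanSpace ℝ (Fin d)
        × EuclideanSpace ℝ (Fin d))),
        (‖(Yn n ω uv.1 - Y ω uv.1) - (Yn n ω uv.2 - Y ω uv.2)‖₊ : ℝ≥0∞) := by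
      funext ω
      simp only [hB_def]
      rw [Finset.sup_eq_iSup]
      simp [Finset.mem_coe]
    rw [heq]
    exact Measurable.biSup _ (Pr k).countable_toSet fun uv _ => mZpair n uv.1 uv.2
  -- chaining
  have hchain : ∀ n K, ∀ᵐ ω ∂P,
      (⨆ x : G, (‖Yn n ω x - Y ω x‖₊ : ℝ≥0∞)) ≤ M n K ω + ∑' j, B n (K + j) ω := by
    intro n K
    filter_upwards [hcontn n, hcont] with ω hYnc hYc
    have hZc : ContinuousOn (fun x => Yn n ω x - Y ω x) G := hYnc.sub hYc
    refine iSup_le fun x => ?_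
    set s : ℕ → EuclideanSpace ℝ (Fin d) := fun m => π (K + m) x with hs_def
    have hsG : ∀ m, s m ∈ G := fun m => hFG _ (hπF (K+m) x)
    have hsd : ∀ m, dist (x : EuclideanSpace ℝ (Fin d)) (s m) ≤ 2⁻¹ ^ (K + m) :=
      fun m => hπd (K+m) x
    have hstend : Tendsto (fun m => Yn n ω (s m) - Y ω (s m)) atTop
        (nhds (Yn n ω x - Y ω x)) := by
      have h1 : Tendsto s atTop (nhdsWithin (x : EuclideanSpace ℝ (Fin d)) G) := by
        rw [tendsto_nhdsWithin_iff]
        constructor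
        · rw [tendsto_iff_dist_tendsto_zero]
          refine squeeze_zero (fun m => dist_nonneg) (fun m => ?_)
            (tendsto_pow_atTop_nhds_zero_of_lt_one (by norm_num) (by norm_num : (2⁻¹:ℝ) < 1))
          rw [dist_comm]
          exact (hsd m).trans (pow_le_pow_of_le_one (by norm_num) (by norm_num)
            (Nat.le_add_left m K))
        · exact Eventually.of_forall hsG
      exact (hZc (x : EuclideanSpace ℝ (Fin d)) x.2).tendsto.comp h1
    have htendE : Tendsto (fun m => (‖Yn n ω (s m) - Y ω (s m)‖₊ : ℝ≥0∞)) atTop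
        (nhds (‖Yn n ω x - Y ω x‖₊ : ℝ≥0∞)) :=
      ENNReal.tendsto_coe.2 hstend.nnnorm
    refine le_of_tendsto htendE (Eventually.of_forall fun m => ?_)
    have hpart : ∀ m, (‖Yn n ω (s m) - Y ω (s m)‖₊ : ℝ≥0∞) ≤
        M n K ω + ∑ j ∈ Finset.range m, B n (K + j) ω := by
      intro m
      induction m with
      | zero =>
        simp only [Finset.range_zero, Finset.sum_empty, add_zero]
        exact Finset.le_sup (f := fun u => (‖Yn n ω u - Y ω u‖₊ : ℝ≥0∞)) (hπF (K+0) x)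
      | succ m ih =>
        have tri : (‖Yn n ω (s (m+1)) - Y ω (s (m+1))‖₊ : ℝ≥0∞) ≤
            (‖(Yn n ω (s (m+1)) - Y ω (s (m+1))) - (Yn n ω (s m) - Y ω (s m))‖₊ : ℝ≥0∞)
              + (‖Yn n ω (s m) - Y ω (s m)‖₊ : ℝ≥0∞) := by
          rw [← ENNReal.coe_add]
          refine ENNReal.coe_le_coe.2 ?_
          have heq : Yn n ω (s (m+1)) - Y ω (s (m+1)) =
              ((Yn n ω (s (m+1)) - Y ω (s (m+1))) - (Yn n ω (s m) - Y ω (s m)))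
                + (Yn n ω (s m) - Y ω (s m)) := by ring
          calc ‖Yn n ω (s (m+1)) - Y ω (s (m+1))‖₊
              = ‖((Yn n ω (s (m+1)) - Y ω (s (m+1))) - (Yn n ω (s m) - Y ω (s m)))
                + (Yn n ω (s m) - Y ω (s m))‖₊ := by rw [← heq]
          _ ≤ _ := nnnorm_add_le _ _
        have hmem : (s (m+1), s m) ∈ Pr (K + m) := by
          rw [hPr_def]
          simp only [Finset.mem_filter, Finset.mem_product]
          refine ⟨⟨hπF (K+m+1) x, hπF (K+m) x⟩, ?_⟩
          have hd1 : dist (s (m+1)) (x : EuclideanSpace ℝ (Fin d)) ≤ 2⁻¹ ^ (K+(m+1)) := by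
            rw [dist_comm]; exact hsd (m+1)
          have hd2 : (2⁻¹:ℝ) ^ (K+(m+1)) ≤ 2⁻¹ ^ (K+m) :=
            pow_le_pow_of_le_one (by norm_num) (by norm_num) (by omega)
          calc dist (s (m+1)) (s m)
              ≤ dist (s (m+1)) (x : EuclideanSpace ℝ (Fin d))
                + dist (x : EuclideanSpace ℝ (Fin d)) (s m) := dist_triangle _ _ _
          _ ≤ 2⁻¹ ^ (K+(m+1)) + 2⁻¹ ^ (K+m) := add_le_add hd1 (hsd m)
          _ ≤ 2 * 2⁻¹ ^ (K+m) := by linarith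
        have hBle : (‖(Yn n ω (s (m+1)) - Y ω (s (m+1)))
            - (Yn n ω (s m) - Y ω (s m))‖₊ : ℝ≥0∞) ≤ B n (K+m) ω :=
          Finset.le_sup (f := fun uv =>
            (‖(Yn n ω uv.1 - Y ω uv.1) - (Yn n ω uv.2 - Y ω uv.2)‖₊ : ℝ≥0∞)) hmem
        calc (‖Yn n ω (s (m+1)) - Y ω (s (m+1))‖₊ : ℝ≥0∞) ≤ _ + _ := tri
        _ ≤ B n (K+m) ω + (M n K ω + ∑ j ∈ Finset.range m, B n (K + j) ω) :=
            add_le_add hBle ih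
        _ = M n K ω + ∑ j ∈ Finset.range (m+1), B n (K + j) ω := by
            rw [Finset.sum_range_succ]; ring
    exact (hpart m).trans (by gcongr; exact ENNReal.sum_le_tsum _)
  -- integral bounds
  have hMint : ∀ n K, (∫⁻ ω, (M n K ω) ^ q ∂P) ≤ ((F K).card : ℝ≥0∞) * (c * a n) := by
    intro n K
    calc (∫⁻ ω, (M n K ω) ^ q ∂P)
        ≤ ∫⁻ ω, ∑ u ∈ F K, (‖Yn n ω u - Y ω u‖₊ : ℝ≥0∞) ^ q ∂P :=
          lintegral_mono fun ω => sup_rpow_le_sum _ _ hq0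
    _ = ∑ u ∈ F K, ∫⁻ ω, (‖Yn n ω u - Y ω u‖₊ : ℝ≥0∞) ^ q ∂P :=
          lintegral_finset_sum _ (fun u _ => (mZ n u).pow_const q)
    _ ≤ ∑ _u ∈ F K, c * a n := Finset.sum_le_sum fun u hu => hrate n u (hFG K hu)
    _ = ((F K).card : ℝ≥0∞) * (c * a n) := by rw [Finset.sum_const, nsmul_eq_mul]
  have hBint : ∀ n k, (∫⁻ ω, (B n k ω) ^ q ∂P) ≤
      (((F (k+1)).card : ℝ≥0∞) * ((F k).card : ℝ≥0∞))
        * (C * ENNReal.ofReal (2 * 2⁻¹ ^ k) ^ q) := by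
    intro n k
    calc (∫⁻ ω, (B n k ω) ^ q ∂P)
        ≤ ∫⁻ ω, ∑ uv ∈ Pr k,
            (‖(Yn n ω uv.1 - Y ω uv.1) - (Yn n ω uv.2 - Y ω uv.2)‖₊ : ℝ≥0∞) ^ q ∂P :=
          lintegral_mono fun ω => sup_rpow_le_sum _ _ hq0
    _ = ∑ uv ∈ Pr k, ∫⁻ ω,
            (‖(Yn n ω uv.1 - Y ω uv.1) - (Yn n ω uv.2 - Y ω uv.2)‖₊ : ℝ≥0∞) ^ q ∂P :=
          lintegral_finset_sum _ fun uv _ => (mZpair n uv.1 uv.2).pow_const q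
    _ ≤ ∑ _uv ∈ Pr k, C * ENNReal.ofReal (2 * 2⁻¹ ^ k) ^ q := by
        refine Finset.sum_le_sum fun uv huv => ?_
        rw [hPr_def] at huv
        simp only [Finset.mem_filter, Finset.mem_product] at huv
        obtain ⟨⟨h1, h2⟩, h3⟩ := huv
        refine (hinc n uv.1 (hFG _ h1) uv.2 (hFG _ h2)).trans ?_
        have hxy : (‖uv.1 - uv.2‖₊ : ℝ≥0∞) ≤ ENNReal.ofReal (2 * 2⁻¹ ^ k) := by
          rw [← ENNReal.ofReal_coe_nnreal, coe_nnnorm]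
          exact ENNReal.ofReal_le_ofReal (by rwa [← dist_eq_norm])
        exact mul_le_mul_right (ENNReal.rpow_le_rpow hxy hq0.le) C
    _ = ((Pr k).card : ℝ≥0∞) * (C * ENNReal.ofReal (2 * 2⁻¹ ^ k) ^ q) := by
        rw [Finset.sum_const, nsmul_eq_mul]
    _ ≤ _ := by
        gcongr
        rw [← Nat.cast_mul]
        refine Nat.cast_le.2 ?_
        rw [hPr_def]
        exact le_trans (Finset.card_filter_le _ _) (le_of_eq (Finset.card_product _ _))
  -- cardinality bound
  set v1 : ℝ≥0∞ := volume (ball (0:EuclideanSpace ℝ (Fin d)) 1) with hv1_def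
  set VR : ℝ≥0∞ := volume (ball (0:EuclideanSpace ℝ (Fin d)) (R+1)) with hVR_def
  have hv1pos : v1 ≠ 0 := (measure_ball_pos volume _ one_pos).ne'
  have hv1top : v1 ≠ ⊤ := measure_ball_lt_top.ne
  have hVRtop : VR ≠ ⊤ := measure_ball_lt_top.ne
  set A : ℝ≥0∞ := VR * v1⁻¹ with hA_def
  have hAtop : A ≠ ⊤ := ENNReal.mul_ne_top hVRtop (ENNReal.inv_ne_top.2 hv1pos)
  have hκ : ∀ k : ℕ, ((F k).card : ℝ≥0∞) ≤ A * 2 ^ ((k+1)*d) := by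
    intro k
    have hpack := packing_card_aux hd0 (hhalf k) (F k) (hFsep k)
      (fun u hu => hR u (hFG k hu))
    have h2 : volume (ball (0:EuclideanSpace ℝ (Fin d)) (R + 2⁻¹ ^ k)) ≤ VR := by
      refine measure_mono (ball_subset_ball ?_)
      have hle1 : (2⁻¹:ℝ) ^ k ≤ 1 := pow_le_one₀ (by norm_num) (by norm_num)
      linarith
    have key : ((F k).card : ℝ≥0∞) * (ENNReal.ofReal ((2⁻¹ ^ k / 2) ^ d) * v1) ≤ VR :=
      hpack.trans h2
    have hofr : ENNReal.ofReal (((2⁻¹:ℝ) ^ k / 2) ^ d) = (2:ℝ≥0∞)⁻¹ ^ ((k+1)*d) := by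
      have heq : ((2⁻¹:ℝ) ^ k / 2) ^ d = (2⁻¹:ℝ) ^ ((k+1)*d) := by
        rw [pow_mul, pow_succ]
        ring
      rw [heq, ENNReal.ofReal_pow (by norm_num)]
      congr 1
      rw [(by norm_num : (2⁻¹:ℝ) = (2:ℝ)⁻¹), ENNReal.ofReal_inv_of_pos (by norm_num),
        ENNReal.ofReal_ofNat]
    rw [hofr] at key
    have hpne0 : ((2:ℝ≥0∞)⁻¹ ^ ((k+1)*d)) ≠ 0 :=
      pow_ne_zero _ (ENNReal.inv_ne_zero.2 (by simp))
    have hptop : ((2:ℝ≥0∞)⁻¹ ^ ((k+1)*d)) ≠ ⊤ :=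
      ENNReal.pow_ne_top (ENNReal.inv_ne_top.2 (by simp))
    have ht0 : ((2:ℝ≥0∞)⁻¹ ^ ((k+1)*d) * v1) ≠ 0 := mul_ne_zero hpne0 hv1pos
    have httop : ((2:ℝ≥0∞)⁻¹ ^ ((k+1)*d) * v1) ≠ ⊤ := ENNReal.mul_ne_top hptop hv1top
    have hdiv : ((F k).card : ℝ≥0∞) ≤ VR / ((2:ℝ≥0∞)⁻¹ ^ ((k+1)*d) * v1) :=
      (ENNReal.le_div_iff_mul_le (Or.inl ht0) (Or.inl httop)).2 key
    refine hdiv.trans (le_of_eq ?_)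
    rw [div_eq_mul_inv, ENNReal.mul_inv (Or.inl hpne0) (Or.inl hptop),
      ← ENNReal.inv_pow, inv_inv, hA_def]
    ring
  -- geometric series bound
  set β : ℕ → ℝ≥0∞ := fun k => ((((F (k+1)).card : ℝ≥0∞) * ((F k).card : ℝ≥0∞)) * C) ^ (1/q)
      * ENNReal.ofReal (2 * 2⁻¹ ^ k) with hβ_def
  set ρ : ℝ≥0∞ := 2 ^ (2*(d:ℝ)/q) * 2⁻¹ with hρ_def
  have hρ1 : ρ < 1 := by
    have h2 : (2:ℝ≥0∞) ^ (2*(d:ℝ)/q) < 2 ^ (1:ℝ) :=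
      ENNReal.rpow_lt_rpow_of_exponent_lt (by norm_num) (by simp) ((div_lt_one hq0).2 hqd)
    calc ρ = 2 ^ (2*(d:ℝ)/q) * 2⁻¹ := hρ_def
    _ < 2 ^ (1:ℝ) * 2⁻¹ := by
        refine ENNReal.mul_lt_mul_left (by simp) (by simp) ?_
        exact h2
    _ = 1 := by
        rw [ENNReal.rpow_one]
        exact ENNReal.mul_inv_cancel (by simp) (by simp)
  set E0 : ℝ≥0∞ := (A * A * C) ^ (1/q) * 2 ^ (3*(d:ℝ)/q) * 2 with hE0_def
  have hE0top : E0 ≠ ⊤ := by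
    refine ENNReal.mul_ne_top (ENNReal.mul_ne_top ?_ ?_) (by simp)
    · exact (ENNReal.rpow_lt_top_of_nonneg (by positivity)
        (ENNReal.mul_ne_top (ENNReal.mul_ne_top hAtop hAtop) hCne)).ne
    · exact (ENNReal.rpow_lt_top_of_nonneg (by positivity) (by simp)).ne
  have hβle : ∀ k, β k ≤ E0 * ρ ^ k := by
    intro k
    have hexp : (k+2)*d + (k+1)*d = (2*k+3)*d := by ring
    have hks : ((F (k+1)).card : ℝ≥0∞) * ((F k).card : ℝ≥0∞) * C
        ≤ (A * A * C) * 2 ^ ((2*k+3)*d) := by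
      calc ((F (k+1)).card : ℝ≥0∞) * ((F k).card : ℝ≥0∞) * C
          ≤ (A * 2 ^ ((k+2)*d)) * (A * 2 ^ ((k+1)*d)) * C := by
            gcongr
            · exact hκ (k+1)
            · exact hκ k
      _ = (A * A * C) * (2 ^ ((k+2)*d) * 2 ^ ((k+1)*d)) := by ring
      _ = (A * A * C) * 2 ^ ((2*k+3)*d) := by rw [← pow_add, hexp]
    have hpow : ((2:ℝ≥0∞) ^ ((2*k+3)*d)) ^ (1/q)
        = 2 ^ (3*(d:ℝ)/q) * (2 ^ (2*(d:ℝ)/q)) ^ k := by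
      rw [← ENNReal.rpow_natCast (2:ℝ≥0∞) ((2*k+3)*d), ← ENNReal.rpow_mul,
        ← ENNReal.rpow_natCast ((2:ℝ≥0∞) ^ (2*(d:ℝ)/q)) k, ← ENNReal.rpow_mul,
        ← ENNReal.rpow_add _ _ (by simp) (by simp)]
      congr 1
      push_cast
      field_simp
      ring
    have hofr2 : ENNReal.ofReal (2 * 2⁻¹ ^ k) = 2 * (2:ℝ≥0∞)⁻¹ ^ k := by
      rw [ENNReal.ofReal_mul (by norm_num), ENNReal.ofReal_ofNat,
        ENNReal.ofReal_pow (by norm_num), (by norm_num : (2⁻¹:ℝ) = (2:ℝ)⁻¹),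
        ENNReal.ofReal_inv_of_pos (by norm_num), ENNReal.ofReal_ofNat]
    calc β k ≤ ((A * A * C) * 2 ^ ((2*k+3)*d)) ^ (1/q) * ENNReal.ofReal (2 * 2⁻¹ ^ k) := by
          rw [hβ_def]
          exact mul_le_mul_left (ENNReal.rpow_le_rpow hks (by positivity)) _
    _ = (A * A * C) ^ (1/q) * (2 ^ (3*(d:ℝ)/q) * (2 ^ (2*(d:ℝ)/q)) ^ k)
          * (2 * (2:ℝ≥0∞)⁻¹ ^ k) := by
        rw [ENNReal.mul_rpow_of_nonneg _ _ (by positivity), hpow, hofr2]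
    _ = E0 * ρ ^ k := by
        rw [hE0_def, hρ_def, mul_pow]
        ring
  have hβtot : ∑' k, β k ≠ ⊤ := by
    refine ne_top_of_le_ne_top ?_ (ENNReal.tsum_le_tsum hβle)
    rw [ENNReal.tsum_mul_left, ENNReal.tsum_geometric]
    refine ENNReal.mul_ne_top hE0top (ENNReal.inv_ne_top.2 ?_)
    intro h
    exact absurd (tsub_eq_zero_iff_le.1 h) (not_le.2 hρ1)
  -- key estimate
  have hkey : ∀ n K, (∫⁻ ω, ⨆ x : G, (‖Yn n ω x - Y ω x‖₊ : ℝ≥0∞) ^ q ∂P) ^ (1/q) ≤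
      (((F K).card : ℝ≥0∞) * (c * a n)) ^ (1/q) + ∑' j, β (j + K) := by
    intro n K
    have h1 : (∫⁻ ω, ⨆ x : G, (‖Yn n ω x - Y ω x‖₊ : ℝ≥0∞) ^ q ∂P) ≤
        ∫⁻ ω, (M n K ω + ∑' j, B n (K + j) ω) ^ q ∂P := by
      refine lintegral_mono_ae ?_
      filter_upwards [hchain n K] with ω hω
      calc (⨆ x : G, (‖Yn n ω x - Y ω x‖₊ : ℝ≥0∞) ^ q)
          = (⨆ x : G, (‖Yn n ω x - Y ω x‖₊ : ℝ≥0∞)) ^ q :=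
            (iSup_rpow_aux _ hq0).symm
      _ ≤ _ := ENNReal.rpow_le_rpow hω hq0.le
    have h2 := ENNReal.lintegral_Lp_add_le (μ := P) (mM n K).aemeasurable
      (Measurable.ennreal_tsum fun j => mB n (K + j)).aemeasurable hq1
    have h3 : (∫⁻ ω, (∑' j, B n (K + j) ω) ^ q ∂P) ^ (1/q) ≤
        ∑' j, (∫⁻ ω, (B n (K + j) ω) ^ q ∂P) ^ (1/q) :=
      lintegral_tsum_rpow P hq1 _ fun j => mB n (K + j)
    have h4 : ∀ j, (∫⁻ ω, (B n (K + j) ω) ^ q ∂P) ^ (1/q) ≤ β (K + j) := by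
      intro j
      refine (ENNReal.rpow_le_rpow (hBint n (K + j)) (by positivity)).trans ?_
      rw [show (((F (K+j+1)).card : ℝ≥0∞) * ((F (K+j)).card : ℝ≥0∞))
          * (C * ENNReal.ofReal (2 * 2⁻¹ ^ (K+j)) ^ q)
          = ((((F (K+j+1)).card : ℝ≥0∞) * ((F (K+j)).card : ℝ≥0∞)) * C)
            * ENNReal.ofReal (2 * 2⁻¹ ^ (K+j)) ^ q by ring]
      rw [ENNReal.mul_rpow_of_nonneg _ _ (by positivity), ← ENNReal.rpow_mul,
        mul_one_div_cancel hqne, ENNReal.rpow_one, hβ_def]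
    have h5 : (∫⁻ ω, (M n K ω) ^ q ∂P) ^ (1/q) ≤
        (((F K).card : ℝ≥0∞) * (c * a n)) ^ (1/q) :=
      ENNReal.rpow_le_rpow (hMint n K) (by positivity)
    calc (∫⁻ ω, ⨆ x : G, (‖Yn n ω x - Y ω x‖₊ : ℝ≥0∞) ^ q ∂P) ^ (1/q)
        ≤ (∫⁻ ω, (M n K ω + ∑' j, B n (K + j) ω) ^ q ∂P) ^ (1/q) :=
          ENNReal.rpow_le_rpow h1 (by positivity)
    _ ≤ (∫⁻ ω, (M n K ω) ^ q ∂P) ^ (1/q)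
          + (∫⁻ ω, (∑' j, B n (K + j) ω) ^ q ∂P) ^ (1/q) := by
        simpa using h2
    _ ≤ (((F K).card : ℝ≥0∞) * (c * a n)) ^ (1/q) + ∑' j, β (K + j) :=
        add_le_add h5 (h3.trans (ENNReal.tsum_le_tsum h4))
    _ = _ := by
        congr 1
        exact tsum_congr fun j => by rw [Nat.add_comm]
  -- final limit argument
  rw [ENNReal.tendsto_nhds_zero]
  intro ε hε
  have hεq : (0:ℝ≥0∞) < ε ^ (1/q) := by
    rw [pos_iff_ne_zero]
    intro h
    rw [ENNReal.rpow_eq_zero_iff] at h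
    rcases h with ⟨h1, _⟩ | ⟨_, h2⟩
    · exact hε.ne' h1
    · have hq' : (0:ℝ) < 1/q := by positivity
      linarith
  set δ : ℝ≥0∞ := ε ^ (1/q) / 2 with hδ_def
  have hδpos : 0 < δ := ENNReal.half_pos hεq.ne'
  obtain ⟨K, hK⟩ :=
    (ENNReal.tendsto_nhds_zero.1 (ENNReal.tendsto_sum_nat_add β hβtot) δ hδpos).exists
  have hδq : (0:ℝ≥0∞) < δ ^ q := by
    rw [pos_iff_ne_zero]
    intro h
    rw [ENNReal.rpow_eq_zero_iff] at h
    rcases h with ⟨h1, _⟩ | ⟨_, h2⟩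
    · exact hδpos.ne' h1
    · linarith
  have hout : Tendsto (fun n => ((F K).card : ℝ≥0∞) * (c * a n)) atTop (nhds 0) := by
    have h8 := ENNReal.Tendsto.const_mul hca (Or.inr (ENNReal.natCast_ne_top (F K).card))
    simpa using h8
  filter_upwards [ENNReal.tendsto_nhds_zero.1 hout (δ ^ q) hδq] with n hn
  have h6 : (((F K).card : ℝ≥0∞) * (c * a n)) ^ (1/q) ≤ δ := by
    calc (((F K).card : ℝ≥0∞) * (c * a n)) ^ (1/q) ≤ (δ ^ q) ^ (1/q) :=
        ENNReal.rpow_le_rpow hn (by positivity)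
    _ = δ := by rw [← ENNReal.rpow_mul, mul_one_div_cancel hqne, ENNReal.rpow_one]
  have h7 : (∫⁻ ω, ⨆ x : G, (‖Yn n ω x - Y ω x‖₊ : ℝ≥0∞) ^ q ∂P) ^ (1/q) ≤ ε ^ (1/q) := by
    refine ((hkey n K).trans (add_le_add h6 hK)).trans ?_
    rw [hδ_def, ENNReal.add_halves]
  calc (∫⁻ ω, ⨆ x : G, (‖Yn n ω x - Y ω x‖₊ : ℝ≥0∞) ^ q ∂P)
      = ((∫⁻ ω, ⨆ x : G, (‖Yn n ω x - Y ω x‖₊ : ℝ≥0∞) ^ q ∂P) ^ (1/q)) ^ q := by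
        rw [← ENNReal.rpow_mul, one_div_mul_cancel hqne, ENNReal.rpow_one]
  _ ≤ (ε ^ (1/q)) ^ q := ENNReal.rpow_le_rpow h7 hq0.le
  _ = ε := by rw [← ENNReal.rpow_mul, one_div_mul_cancel hqne, ENNReal.rpow_one]
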